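/- arXiv:2601.07045 — 6 statements merged into one kernel-verified Lean document; each statement's English description precedes it below -/
import Mathlib

section
/- The GIST kernel K satisfies detailed balance with respect to μ: for all θ, θ' ∈ S, μ(θ)·K(θ,θ') = μ(θ')·K(θ',θ). Consequently, the Markov chain on S defined by the GIST transition is reversible with respect to μ. -/
/-- **GIST detailed balance.**
Let `S` and `V` be countable sets, `μ` a positive probability mass function on `S`,
`pa (·|θ)` a probability mass function on `V` for each `θ`, and `Ψ : S × V → S × V`
an involution.  With the extended target `μ̂(θ,v) = μ(θ)·pa(v|θ)`, the acceptance
probability `α(θ,v) = min(1, μ̂(Ψ(θ,v))/μ̂(θ,v))` (set to `1` when `μ̂(θ,v) = 0`),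
the GIST transition kernel
`K(θ,θ') = Σ_v pa(v|θ)·[α(θ,v)·1{θ' = Ψ₁(θ,v)} + (1−α(θ,v))·1{θ' = θ}]`
satisfies detailed balance with respect to `μ`:
`μ(θ)·K(θ,θ') = μ(θ')·K(θ',θ)` for all `θ, θ'`; hence the GIST chain is
reversible with respect to `μ`. -/
theorem gist_detailed_balance
    {S V : Type*} [Countable S] [Countable V] [DecidableEq S]
    (μ : S → ℝ) (hμpos : ∀ θ, 0 < μ θ) (hμsum : HasSum μ 1)
    (pa : S → V → ℝ) (hpa0 : ∀ θ v, 0 ≤ pa θ v) (hpasum : ∀ θ, HasSum (pa θ) 1)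
    (Ψ : S × V → S × V) (hΨ : Function.Involutive Ψ)
    (μhat : S × V → ℝ) (hμhat : ∀ z, μhat z = μ z.1 * pa z.1 z.2)
    (α : S × V → ℝ)
    (hα : ∀ z, α z = if 0 < μhat z then min 1 (μhat (Ψ z) / μhat z) else 1)
    (K : S → S → ℝ)
    (hK : ∀ θ θ', K θ θ' =
      ∑' v : V, pa θ v *
        (α (θ, v) * (if θ' = (Ψ (θ, v)).1 then 1 else 0)
          + (1 - α (θ, v)) * (if θ' = θ then 1 else 0))) :
    ∀ θ θ' : S, μ θ * K θ θ' = μ θ' * K θ' θ := by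

  -- basic nonnegativity facts
  have hμhat0 : ∀ z : S × V, 0 ≤ μhat z := by
    intro z; rw [hμhat]; exact mul_nonneg (hμpos z.1).le (hpa0 z.1 z.2)
  set F : S × V → ℝ := fun z => min (μhat z) (μhat (Ψ z)) with hF
  have hF0 : ∀ z, 0 ≤ F z := fun z => le_min (hμhat0 z) (hμhat0 (Ψ z))
  have hFle : ∀ z, F z ≤ μhat z := fun z => min_le_left _ _
  have hFΨ : ∀ z, F (Ψ z) = F z := by
    intro z; simp only [hF, hΨ z]; exact min_comm _ _
  have hFα : ∀ z, μhat z * α z = F z := by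
    intro z
    rw [hα]
    by_cases h : 0 < μhat z
    · rw [if_pos h, mul_min_of_nonneg _ _ h.le, mul_one,
        mul_div_cancel₀ _ (ne_of_gt h)]
    · have h0 : μhat z = 0 := le_antisymm (not_lt.mp h) (hμhat0 z)
      have hm := min_eq_left (hμhat0 (Ψ z))
      simp [hF, h0, hm]
  -- summability of the extended target
  have hsum : Summable μhat := by
    have h1 : Summable (fun z : S × V => μ z.1 * pa z.1 z.2) := by
      rw [summable_prod_of_nonneg
        (fun z => mul_nonneg (hμpos z.1).le (hpa0 z.1 z.2))]
      refine ⟨fun x => (hpasum x).summable.mul_left (μ x), ?_⟩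
      have : (fun x => ∑' v, μ x * pa x v) = μ := by
        funext x; rw [tsum_mul_left, (hpasum x).tsum_eq, mul_one]
      rw [this]; exact hμsum.summable
    exact h1.congr fun z => (hμhat z).symm
  have hsumH : ∀ a b : S, Summable (fun z : S × V =>
      F z * (if z.1 = a then 1 else 0) * (if (Ψ z).1 = b then 1 else 0)) := by
    intro a b
    refine Summable.of_nonneg_of_le (fun z => ?_) (fun z => ?_) hsum
    · split_ifs <;> simp [hF0 z]
    · split_ifs <;> simp [hFle z, hμhat0 z, hF0 z]
  -- the key reformulation
  have key : ∀ a b : S, a ≠ b → μ a * K a b =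
      ∑' z : S × V, F z * (if z.1 = a then 1 else 0)
        * (if (Ψ z).1 = b then 1 else 0) := by
    intro a b hab
    rw [Summable.tsum_prod' (hsumH a b) (fun b' => (hsumH a b).prod_factor b'), tsum_eq_single a (by
      intro b' hb'
      have : (fun v : V => F (b', v) * (if (b', v).1 = a then 1 else 0)
          * (if (Ψ (b', v)).1 = b then 1 else 0)) = fun _ => (0 : ℝ) := by
        funext v; simp [hb']
      rw [this, tsum_zero])]
    rw [hK, ← tsum_mul_left]
    apply tsum_congr
    intro v
    rw [if_neg (Ne.symm hab), mul_zero, add_zero]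
    have h1 : (if b = (Ψ (a, v)).1 then (1:ℝ) else 0)
        = (if (Ψ (a, v)).1 = b then 1 else 0) := by simp [eq_comm]
    have h2 : μ a * (pa a v * (α (a, v) * (if b = (Ψ (a, v)).1 then (1:ℝ) else 0)))
        = (μhat (a, v) * α (a, v)) * (if b = (Ψ (a, v)).1 then (1:ℝ) else 0) := by
      rw [hμhat]; ring
    rw [h2, hFα, h1]
    simp
  intro θ θ'
  by_cases h : θ = θ'
  · subst h; rfl
  · have h' : θ' ≠ θ := fun e => h e.symm
    rw [key θ θ' h, key θ' θ h']
    have he := Equiv.tsum_eq (Function.Involutive.toPerm Ψ hΨ)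
      (fun z => F z * (if z.1 = θ' then 1 else 0) * (if (Ψ z).1 = θ then 1 else 0))
    rw [← he]
    apply tsum_congr
    intro z
    simp only [Function.Involutive.coe_toPerm, hΨ z, hFΨ z]
    exact mul_right_comm _ _ _
end

section
/- The full-orbit categorical kernel K satisfies detailed balance with respect to w: w(σ)·K(σ,σ') = w(σ')·K(σ',σ) for all σ, σ' ∈ S_n. Consequently K is reversible with respect to, and leaves invariant, the probability distribution P(σ) = w(σ)/Σ_{ρ∈S_n} w(ρ). -/
open Finset

section aux
variable {G : Type*} [Group G] [Fintype G] [DecidableEq G]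

/-- The orbit sum (denominator) is invariant along the orbit. -/
lemma orbit_sum_eq (w : G → ℝ) (η : G) (σ : G) {r : ℕ} (hr : r < orderOf η) :
    ∑ t ∈ Finset.range (orderOf η), w (σ * η ^ r * η ^ t)
      = ∑ t ∈ Finset.range (orderOf η), w (σ * η ^ t) := by
  have hm : 0 < orderOf η := lt_of_le_of_lt (Nat.zero_le r) hr
  refine Finset.sum_nbij' (fun t => (r + t) % orderOf η)
    (fun s => (s + (orderOf η - r)) % orderOf η) ?_ ?_ ?_ ?_ ?_
  · intro t _; exact Finset.mem_range.2 (Nat.mod_lt _ hm)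
  · intro s _; exact Finset.mem_range.2 (Nat.mod_lt _ hm)
  · intro t ht
    have ht' := Finset.mem_range.1 ht
    show ((r + t) % orderOf η + (orderOf η - r)) % orderOf η = t
    rw [Nat.mod_add_mod]
    have h2 : r + t + (orderOf η - r) = t + orderOf η := by omega
    rw [h2, Nat.add_mod_right, Nat.mod_eq_of_lt ht']
  · intro s hs
    have hs' := Finset.mem_range.1 hs
    show (r + (s + (orderOf η - r)) % orderOf η) % orderOf η = s
    rw [Nat.add_mod_mod]
    have h2 : r + (s + (orderOf η - r)) = s + orderOf η := by omega
    rw [h2, Nat.add_mod_right, Nat.mod_eq_of_lt hs']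
  · intro t _
    rw [mul_assoc, ← pow_add, ← pow_mod_orderOf]

/-- The numerator collapses to an indicator. -/
lemma num_eq (w : G → ℝ) (η σ σ' : G) :
    ∑ r ∈ Finset.range (orderOf η),
        (if σ * η ^ r = σ' then (1 : ℝ) else 0) * w (σ * η ^ r)
      = if ∃ r < orderOf η, σ * η ^ r = σ' then w σ' else 0 := by
  by_cases h : ∃ r < orderOf η, σ * η ^ r = σ'
  · obtain ⟨r0, hr0, he⟩ := h
    rw [if_pos ⟨r0, hr0, he⟩, Finset.sum_eq_single r0]
    · rw [if_pos he, one_mul, he]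
    · intro b hb hne
      rw [if_neg, zero_mul]
      intro hbe
      exact hne (pow_injOn_Iio_orderOf (Set.mem_Iio.2 (Finset.mem_range.1 hb))
        (Set.mem_Iio.2 hr0) (mul_left_cancel (hbe.trans he.symm)))
    · intro hcon; exact absurd (Finset.mem_range.2 hr0) hcon
  · rw [if_neg h]
    refine Finset.sum_eq_zero fun r hr => ?_
    rw [if_neg fun he => h ⟨r, Finset.mem_range.1 hr, he⟩, zero_mul]

/-- Symmetry of orbit membership. -/
lemma orbit_symm {η σ σ' : G} {r : ℕ} (hr : r < orderOf η) (he : σ * η ^ r = σ') :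
    ∃ s < orderOf η, σ' * η ^ s = σ := by
  rcases Nat.eq_zero_or_pos r with h0 | h0
  · subst h0; simp at he
    exact ⟨0, lt_of_le_of_lt (Nat.zero_le 0) hr, by simp [he]⟩
  · refine ⟨orderOf η - r, by omega, ?_⟩
    rw [← he, mul_assoc, ← pow_add]
    have : r + (orderOf η - r) = orderOf η := by omega
    rw [this, pow_orderOf_eq_one, mul_one]

end aux

/-- **Detailed balance, reversibility and invariance of the full-orbit categorical kernel.**
Let `w : S_n → (0,∞)` be a positive weight function and `q` a probability mass
function on `S_n` (a state-independent direction law).  The full-orbit categorical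
kernel
`K(σ,σ') = Σ_η q(η)·(Σ_{r<ord(η)} 1{σ∘η^r = σ'}·w(σ∘η^r)) / (Σ_{t<ord(η)} w(σ∘η^t))`
satisfies detailed balance with respect to `w`: `w(σ)·K(σ,σ') = w(σ')·K(σ',σ)`.
Consequently `K` is reversible with respect to, and leaves invariant, the
probability distribution `P(σ) = w(σ)/Σ_ρ w(ρ)`. -/
theorem fullOrbit_detailed_balance {n : ℕ}
    (w : Equiv.Perm (Fin n) → ℝ) (hw : ∀ σ, 0 < w σ)
    (q : Equiv.Perm (Fin n) → ℝ) (hq0 : ∀ η, 0 ≤ q η)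
    (hq1 : ∑ η : Equiv.Perm (Fin n), q η = 1)
    (K : Equiv.Perm (Fin n) → Equiv.Perm (Fin n) → ℝ)
    (hK : ∀ σ σ', K σ σ' =
      ∑ η : Equiv.Perm (Fin n), q η *
        (∑ r ∈ Finset.range (orderOf η),
            (if σ * η ^ r = σ' then (1 : ℝ) else 0) * w (σ * η ^ r)) /
        (∑ t ∈ Finset.range (orderOf η), w (σ * η ^ t)))
    (P : Equiv.Perm (Fin n) → ℝ)
    (hP : ∀ σ, P σ = w σ / ∑ ρ : Equiv.Perm (Fin n), w ρ) :
    (∀ σ σ', w σ * K σ σ' = w σ' * K σ' σ) ∧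
    (∀ σ σ', P σ * K σ σ' = P σ' * K σ' σ) ∧
    (∀ σ', ∑ σ : Equiv.Perm (Fin n), P σ * K σ σ' = P σ') := by
  have hDpos : ∀ (σ η : Equiv.Perm (Fin n)),
      0 < ∑ t ∈ Finset.range (orderOf η), w (σ * η ^ t) := fun σ η =>
    Finset.sum_pos (fun t _ => hw _) (Finset.nonempty_range_iff.2 (orderOf_pos η).ne')
  -- detailed balance
  have db : ∀ σ σ', w σ * K σ σ' = w σ' * K σ' σ := by
    intro σ σ'
    rw [hK, hK, Finset.mul_sum, Finset.mul_sum]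
    refine Finset.sum_congr rfl fun η _ => ?_
    rw [num_eq, num_eq]
    by_cases h : ∃ r < orderOf η, σ * η ^ r = σ'
    · obtain ⟨r, hr, he⟩ := h
      have h' : ∃ s < orderOf η, σ' * η ^ s = σ := orbit_symm hr he
      have hD : ∑ t ∈ Finset.range (orderOf η), w (σ' * η ^ t)
          = ∑ t ∈ Finset.range (orderOf η), w (σ * η ^ t) := by
        rw [← he]; exact orbit_sum_eq w η σ hr
      rw [if_pos ⟨r, hr, he⟩, if_pos h', hD]
      ring
    · have h' : ¬ ∃ s < orderOf η, σ' * η ^ s = σ := by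
        rintro ⟨s, hs, he⟩
        exact h (orbit_symm hs he)
      rw [if_neg h, if_neg h']
      ring
  -- rows sum to one
  have hrow : ∀ σ, ∑ σ' : Equiv.Perm (Fin n), K σ σ' = 1 := by
    intro σ
    have : ∑ σ' : Equiv.Perm (Fin n), K σ σ'
        = ∑ η : Equiv.Perm (Fin n), q η := by
      simp only [hK]
      rw [Finset.sum_comm]
      refine Finset.sum_congr rfl fun η _ => ?_
      have hD := (hDpos σ η).ne'
      rw [← Finset.sum_div, ← Finset.mul_sum]
      rw [Finset.sum_comm]
      have : ∑ r ∈ Finset.range (orderOf η), ∑ σ' : Equiv.Perm (Fin n),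
          (if σ * η ^ r = σ' then (1 : ℝ) else 0) * w (σ * η ^ r)
          = ∑ t ∈ Finset.range (orderOf η), w (σ * η ^ t) := by
        refine Finset.sum_congr rfl fun r _ => ?_
        rw [Finset.sum_eq_single (σ * η ^ r)]
        · simp
        · intro b _ hb; rw [if_neg (fun h => hb h.symm), zero_mul]
        · intro h; exact absurd (Finset.mem_univ _) h
      rw [this, mul_div_assoc, div_self hD, mul_one]
    rw [this, hq1]
  have hZ : 0 < ∑ ρ : Equiv.Perm (Fin n), w ρ :=
    Finset.sum_pos (fun ρ _ => hw ρ) ⟨1, Finset.mem_univ 1⟩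
  have db2 : ∀ σ σ', P σ * K σ σ' = P σ' * K σ' σ := by
    intro σ σ'
    rw [hP, hP, div_mul_eq_mul_div, div_mul_eq_mul_div, db]
  refine ⟨db, db2, fun σ' => ?_⟩
  calc ∑ σ : Equiv.Perm (Fin n), P σ * K σ σ'
      = ∑ σ : Equiv.Perm (Fin n), P σ' * K σ' σ :=
        Finset.sum_congr rfl fun σ _ => db2 σ σ'
    _ = P σ' * ∑ σ : Equiv.Perm (Fin n), K σ' σ := (Finset.mul_sum _ _ _).symm
    _ = P σ' := by rw [hrow, mul_one]
end

section
/- Let p and q be probability mass functions on a finite nonempty set I, and let ε ≥ 0 be such that e^{−ε}·p(t) ≤ q(t) ≤ e^{ε}·p(t) for all t ∈ I. Then TV(p,q) ≤ tanh(ε/2). -/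
open Finset

/-- **TV bound under bounded log-likelihood ratio.**
Let `p` and `q` be probability mass functions on a finite nonempty set `I` and
`ε ≥ 0` be such that `e^{−ε}·p(t) ≤ q(t) ≤ e^{ε}·p(t)` for all `t ∈ I`.  Then
`TV(p,q) = (1/2)·Σ_t |p(t) − q(t)| ≤ tanh(ε/2)`. -/
theorem tv_le_tanh_of_bounded_llr {I : Type*} [Fintype I] [Nonempty I]
    (p q : I → ℝ)
    (hp0 : ∀ t, 0 ≤ p t) (hp1 : ∑ t, p t = 1)
    (hq0 : ∀ t, 0 ≤ q t) (hq1 : ∑ t, q t = 1)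
    (ε : ℝ) (hε : 0 ≤ ε)
    (hlo : ∀ t, Real.exp (-ε) * p t ≤ q t)
    (hhi : ∀ t, q t ≤ Real.exp ε * p t) :
    (1 / 2) * ∑ t, |p t - q t| ≤ Real.tanh (ε / 2) := by
  set E := Real.exp ε with hE
  have hE1 : 1 ≤ E := Real.one_le_exp hε
  have hEpos : 0 < E := lt_of_lt_of_le one_pos hE1
  set lam := (E - 1) / (E + 1) with hlam
  have hEp1 : 0 < E + 1 := by linarith
  -- pointwise bound
  have key : ∀ t, |p t - q t| ≤ lam * (p t + q t) := by
    intro t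
    have h1 : q t ≤ E * p t := hhi t
    have h2 : p t ≤ E * q t := by
      have := hlo t
      have hinv : Real.exp (-ε) = E⁻¹ := by rw [Real.exp_neg, hE]
      rw [hinv] at this
      calc p t = E * (E⁻¹ * p t) := by field_simp
        _ ≤ E * q t := by
            exact mul_le_mul_of_nonneg_left this (le_of_lt hEpos)
    rw [abs_le]
    constructor
    · rw [hlam]
      rw [div_mul_eq_mul_div, neg_le, le_div_iff₀ hEp1]
      nlinarith [hq0 t]
    · rw [hlam, div_mul_eq_mul_div, le_div_iff₀ hEp1]
      nlinarith [hp0 t]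
  have hsum : ∑ t, |p t - q t| ≤ ∑ t, lam * (p t + q t) :=
    Finset.sum_le_sum fun t _ => key t
  have hsum2 : ∑ t, lam * (p t + q t) = 2 * lam := by
    rw [← Finset.mul_sum, Finset.sum_add_distrib, hp1, hq1]; ring
  have htanh : Real.tanh (ε / 2) = lam := by
    rw [Real.tanh_eq_sinh_div_cosh, Real.sinh_eq, Real.cosh_eq, hlam, hE]
    have h : Real.exp ε = Real.exp (ε / 2) * Real.exp (ε / 2) := by
      rw [← Real.exp_add]; ring_nf
    have hpos : 0 < Real.exp (ε / 2) := Real.exp_pos _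
    rw [Real.exp_neg, h]
    field_simp
  rw [htanh]
  calc (1 / 2) * ∑ t, |p t - q t| ≤ (1 / 2) * (2 * lam) := by
        rw [hsum2] at hsum; linarith
    _ = lam := by ring
end

section
/- Let E : S_n → ℝ, β > 0, and L_E ≥ 0 satisfy the Lipschitz condition |E(π) − E(ρ)| ≤ L_E·d_Cay(π,ρ) for all π, ρ ∈ S_n. Let I be a finite nonempty index set, let k ≥ 1 be an integer, and let (σ_t)_{t∈I} and (σ'_t)_{t∈I} be families in S_n with d_Cay(σ_t, σ'_t) ≤ k for all t ∈ I. Define the categorical laws p(t) = w(σ_t)/Σ_{s∈I} w(σ_s) and q(t) = w(σ'_t)/Σ_{s∈I} w(σ'_s), where w(σ) = exp(−β·E(σ)). Then TV(p,q) ≤ tanh(β·L_E·k). In particular, when k = 1 one has TV(p,q) ≤ tanh(β·L_E). -/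
open Finset

/-- The Cayley distance on `S_n`: the minimal number of transpositions whose
product equals `π⁻¹∘ρ` (so `d_Cay(π,ρ) = 0` iff `π = ρ`). -/
noncomputable def dCay {n : ℕ} (π ρ : Equiv.Perm (Fin n)) : ℕ :=
  sInf {k | ∃ l : List (Equiv.Perm (Fin n)),
    (∀ τ ∈ l, τ.IsSwap) ∧ l.prod = π⁻¹ * ρ ∧ l.length = k}

lemma key_tanh (c x y : ℝ) (hc : 0 ≤ c) (hx : 0 < x) (hy : 0 < y)
    (h1 : x ≤ (Real.exp c * Real.exp c) * y) (h2 : y ≤ (Real.exp c * Real.exp c) * x) :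
    |x - y| ≤ Real.tanh c * (x + y) := by
  have hupos : (0:ℝ) < Real.exp c := Real.exp_pos c
  have ht : Real.tanh c = (Real.exp c * Real.exp c - 1) / (Real.exp c * Real.exp c + 1) := by
    rw [Real.tanh_eq_sinh_div_cosh, Real.sinh_eq, Real.cosh_eq, Real.exp_neg]
    have h0 : Real.exp c ≠ 0 := (Real.exp_pos c).ne'
    field_simp
  set u := Real.exp c with hu
  have hd : (0:ℝ) < u * u + 1 := by positivity
  rw [ht, abs_sub_le_iff]
  constructor <;>
  · rw [div_mul_eq_mul_div, le_div_iff₀ hd]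
    nlinarith

/-- **Orbit TV bound for Mallows weights.**
Let `E : S_n → ℝ`, `β > 0` and `L_E ≥ 0` satisfy the Lipschitz condition
`|E(π) − E(ρ)| ≤ L_E·d_Cay(π,ρ)`.  Let `I` be a finite nonempty index set,
`k ≥ 1` an integer, and `(σ_t)`, `(σ'_t)` families in `S_n` with
`d_Cay(σ_t, σ'_t) ≤ k` for all `t`.  With `w(σ) = exp(−β·E(σ))` and categorical
laws `p(t) = w(σ_t)/Σ_s w(σ_s)`, `q(t) = w(σ'_t)/Σ_s w(σ'_s)`, one has
`TV(p,q) ≤ tanh(β·L_E·k)`; in particular `TV(p,q) ≤ tanh(β·L_E)` when `k = 1`. -/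
theorem mallows_orbit_tv {n : ℕ}
    (E : Equiv.Perm (Fin n) → ℝ) (β LE : ℝ) (hβ : 0 < β) (hLE : 0 ≤ LE)
    (hLip : ∀ π ρ : Equiv.Perm (Fin n), |E π - E ρ| ≤ LE * (dCay π ρ : ℝ))
    {I : Type*} [Fintype I] [Nonempty I]
    (k : ℕ) (hk : 1 ≤ k)
    (σ σ' : I → Equiv.Perm (Fin n))
    (hprox : ∀ t, dCay (σ t) (σ' t) ≤ k)
    (w : Equiv.Perm (Fin n) → ℝ) (hw : ∀ π, w π = Real.exp (-β * E π))
    (p q : I → ℝ)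
    (hp : ∀ t, p t = w (σ t) / ∑ s, w (σ s))
    (hq : ∀ t, q t = w (σ' t) / ∑ s, w (σ' s)) :
    (1 / 2) * ∑ t, |p t - q t| ≤ Real.tanh (β * LE * k) := by
  set c := β * LE * k with hcdef
  have hc0 : 0 ≤ c := by positivity
  have hwpos : ∀ π, 0 < w π := fun π => by rw [hw]; exact Real.exp_pos _
  have hratio : ∀ t, w (σ t) ≤ Real.exp c * w (σ' t) ∧
      w (σ' t) ≤ Real.exp c * w (σ t) := by
    intro t
    have hE : |E (σ t) - E (σ' t)| ≤ LE * k := by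
      calc |E (σ t) - E (σ' t)| ≤ LE * (dCay (σ t) (σ' t) : ℝ) := hLip _ _
        _ ≤ LE * k := by
            apply mul_le_mul_of_nonneg_left _ hLE
            exact_mod_cast hprox t
    rw [abs_le] at hE
    constructor
    · rw [hw, hw, ← Real.exp_add]
      apply Real.exp_le_exp.mpr
      nlinarith [hE.1, hE.2]
    · rw [hw, hw, ← Real.exp_add]
      apply Real.exp_le_exp.mpr
      nlinarith [hE.1, hE.2]
  set a : I → ℝ := fun t => w (σ t) with ha
  set b : I → ℝ := fun t => w (σ' t) with hb
  set A := ∑ s, a s with hA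
  set B := ∑ s, b s with hB
  have hApos : 0 < A := Finset.sum_pos (fun s _ => hwpos _) Finset.univ_nonempty
  have hBpos : 0 < B := Finset.sum_pos (fun s _ => hwpos _) Finset.univ_nonempty
  have hpq : ∀ t, |p t - q t| = |a t * B - b t * A| / (A * B) := by
    intro t
    rw [hp, hq, div_sub_div _ _ hApos.ne' hBpos.ne', abs_div,
      abs_of_pos (mul_pos hApos hBpos), mul_comm A (w (σ' t))]
  have hkey : ∀ t s : I, |a t * b s - b t * a s| ≤
      Real.tanh c * (a t * b s + b t * a s) := by
    intro t s
    apply key_tanh c _ _ hc0 (mul_pos (hwpos _) (hwpos _)) (mul_pos (hwpos _) (hwpos _))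
    · calc a t * b s ≤ (Real.exp c * b t) * (Real.exp c * a s) :=
            mul_le_mul (hratio t).1 (hratio s).2 (hwpos _).le
              (mul_pos (Real.exp_pos c) (hwpos _)).le
        _ = (Real.exp c * Real.exp c) * (b t * a s) := by ring
    · calc b t * a s ≤ (Real.exp c * a t) * (Real.exp c * b s) :=
            mul_le_mul (hratio t).2 (hratio s).1 (hwpos _).le
              (mul_pos (Real.exp_pos c) (hwpos _)).le
        _ = (Real.exp c * Real.exp c) * (a t * b s) := by ring
  have hsum : ∑ t, |a t * B - b t * A| ≤ Real.tanh c * (2 * (A * B)) := by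
    calc ∑ t, |a t * B - b t * A|
        = ∑ t, |∑ s, (a t * b s - b t * a s)| := by
          refine Finset.sum_congr rfl fun t _ => ?_
          rw [Finset.sum_sub_distrib, ← Finset.mul_sum, ← Finset.mul_sum]
      _ ≤ ∑ t, ∑ s, |a t * b s - b t * a s| :=
          Finset.sum_le_sum fun t _ => Finset.abs_sum_le_sum_abs _ _
      _ ≤ ∑ t, ∑ s, Real.tanh c * (a t * b s + b t * a s) :=
          Finset.sum_le_sum fun t _ => Finset.sum_le_sum fun s _ => hkey t s
      _ = Real.tanh c * (2 * (A * B)) := by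
          simp only [← Finset.mul_sum]
          congr 1
          calc ∑ t, ∑ s, (a t * b s + b t * a s)
              = ∑ t, (a t * B + b t * A) := by
                refine Finset.sum_congr rfl fun t _ => ?_
                rw [Finset.sum_add_distrib, ← Finset.mul_sum, ← Finset.mul_sum]
            _ = A * B + B * A := by
                rw [Finset.sum_add_distrib, ← Finset.sum_mul, ← Finset.sum_mul]
            _ = 2 * (A * B) := by ring
  have hS : ∑ t, |p t - q t| = (∑ t, |a t * B - b t * A|) / (A * B) := by
    rw [Finset.sum_div]
    exact Finset.sum_congr rfl fun t _ => hpq t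
  have h2AB : (0:ℝ) < 2 * (A * B) := by positivity
  have heq : (1:ℝ) / 2 * ((∑ t, |a t * B - b t * A|) / (A * B))
      = (∑ t, |a t * B - b t * A|) / (2 * (A * B)) := by
    ring
  rw [hS, heq, div_le_iff₀ h2AB]
  exact hsum
end

section
/- Let E : S_n → ℝ, β > 0, and L_E ≥ 0 satisfy |E(π) − E(ρ)| ≤ L_E·d_Cay(π,ρ) for all π, ρ ∈ S_n, and set w(σ) = exp(−β·E(σ)). Let I be a finite nonempty index set and let X, Y : I → S_n satisfy d_Cay(X_t, Y_t) ≤ 1 for all t ∈ I and d_Cay(X_s, Y_t) ≤ D for all s, t ∈ I, where D ≥ 1. Define p(t) = w(X_t)/Σ_{s∈I} w(X_s) and q(t) = w(Y_t)/Σ_{s∈I} w(Y_s). Then there exists a probability mass function γ on I×I whose marginals are p and q (i.e. Σ_{t} γ(s,t) = p(s) for all s and Σ_{s} γ(s,t) = q(t) for all t) such that Σ_{s,t∈I} γ(s,t)·d_Cay(X_s, Y_t) ≤ 1 + (D − 1)·tanh(β·L_E). -/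
open Finset

lemma one_sub_exp_neg_le_tanh (a : ℝ) (ha : 0 ≤ a) :
    1 - Real.exp (-a) ≤ Real.tanh a := by
  rw [Real.tanh_eq_sinh_div_cosh, le_div_iff₀ (Real.cosh_pos a), Real.sinh_eq, Real.cosh_eq]
  have h1 : Real.exp a * Real.exp (-a) = 1 := by rw [← Real.exp_add]; simp
  have h2 : Real.exp (-a) ≤ 1 := Real.exp_le_one_iff.mpr (by linarith)
  nlinarith [sq_nonneg (1 - Real.exp (-a)), Real.exp_pos (-a), Real.exp_pos a]

/-- **Expected Cayley distance in the mismatch case.**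
Let `E : S_n → ℝ`, `β > 0`, `L_E ≥ 0` satisfy `|E(π) − E(ρ)| ≤ L_E·d_Cay(π,ρ)`,
and set `w(σ) = exp(−β·E(σ))`.  Let `I` be finite and nonempty, `X, Y : I → S_n`
with `d_Cay(X_t, Y_t) ≤ 1` for all `t` and `d_Cay(X_s, Y_t) ≤ D` for all `s, t`,
where `D ≥ 1`.  With `p(t) = w(X_t)/Σ_s w(X_s)` and `q(t) = w(Y_t)/Σ_s w(Y_s)`,
there exists a coupling `γ` of `p` and `q` with
`Σ_{s,t} γ(s,t)·d_Cay(X_s, Y_t) ≤ 1 + (D − 1)·tanh(β·L_E)`. -/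
theorem mismatch_expected_distance {n : ℕ}
    (E : Equiv.Perm (Fin n) → ℝ) (β LE : ℝ) (hβ : 0 < β) (hLE : 0 ≤ LE)
    (hLip : ∀ π ρ : Equiv.Perm (Fin n), |E π - E ρ| ≤ LE * (dCay π ρ : ℝ))
    {I : Type*} [Fintype I] [Nonempty I]
    (X Y : I → Equiv.Perm (Fin n))
    (hXY : ∀ t, dCay (X t) (Y t) ≤ 1)
    (D : ℝ) (hD : 1 ≤ D)
    (hcross : ∀ s t, (dCay (X s) (Y t) : ℝ) ≤ D)
    (w : Equiv.Perm (Fin n) → ℝ) (hw : ∀ π, w π = Real.exp (-β * E π))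
    (p q : I → ℝ)
    (hp : ∀ t, p t = w (X t) / ∑ s, w (X s))
    (hq : ∀ t, q t = w (Y t) / ∑ s, w (Y s)) :
    ∃ γ : I × I → ℝ,
      (∀ z, 0 ≤ γ z) ∧
      (∀ s, ∑ t, γ (s, t) = p s) ∧
      (∀ t, ∑ s, γ (s, t) = q t) ∧
      ∑ s, ∑ t, γ (s, t) * (dCay (X s) (Y t) : ℝ)
        ≤ 1 + (D - 1) * Real.tanh (β * LE) := by
  classical
  set a := β * LE with ha_def
  have ha : 0 ≤ a := mul_nonneg hβ.le hLE
  have htanh : 1 - Real.exp (-a) ≤ Real.tanh a := one_sub_exp_neg_le_tanh a ha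
  have hexp1 : Real.exp (-a) ≤ 1 := Real.exp_le_one_iff.mpr (by linarith)
  have hwpos : ∀ π, 0 < w π := fun π => by rw [hw]; exact Real.exp_pos _
  have hU : 0 < ∑ s, w (X s) := Finset.sum_pos (fun i _ => hwpos _) univ_nonempty
  have hV : 0 < ∑ s, w (Y s) := Finset.sum_pos (fun i _ => hwpos _) univ_nonempty
  have hppos : ∀ t, 0 < p t := fun t => by rw [hp]; exact div_pos (hwpos _) hU
  have hqpos : ∀ t, 0 < q t := fun t => by rw [hq]; exact div_pos (hwpos _) hV
  have hpsum : ∑ t, p t = 1 := by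
    simp only [hp]; rw [← Finset.sum_div, div_self hU.ne']
  have hqsum : ∑ t, q t = 1 := by
    simp only [hq]; rw [← Finset.sum_div, div_self hV.ne']
  have hd1 : ∀ t, (dCay (X t) (Y t) : ℝ) ≤ 1 := fun t => by exact_mod_cast hXY t
  have hdnn : ∀ s t, (0:ℝ) ≤ (dCay (X s) (Y t) : ℝ) := fun s t => Nat.cast_nonneg _
  -- comparability of weights at matched indices
  have hedge : ∀ t, Real.exp (-a) * w (X t) ≤ w (Y t) ∧
      Real.exp (-a) * w (Y t) ≤ w (X t) := by
    intro t
    have hdn : (0:ℝ) ≤ (dCay (X t) (Y t) : ℝ) := Nat.cast_nonneg _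
    have habs : |E (X t) - E (Y t)| ≤ LE := by
      calc |E (X t) - E (Y t)| ≤ LE * (dCay (X t) (Y t) : ℝ) := hLip _ _
        _ ≤ LE * 1 := mul_le_mul_of_nonneg_left (hd1 t) hLE
        _ = LE := mul_one LE
    obtain ⟨h1, h2⟩ := abs_le.mp habs
    constructor
    · rw [hw, hw, ← Real.exp_add]
      refine Real.exp_le_exp.mpr ?_
      have := mul_nonneg hβ.le (show (0:ℝ) ≤ LE - (E (Y t) - E (X t)) by linarith)
      nlinarith
    · rw [hw, hw, ← Real.exp_add]
      refine Real.exp_le_exp.mpr ?_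
      have := mul_nonneg hβ.le (show (0:ℝ) ≤ LE - (E (X t) - E (Y t)) by linarith)
      nlinarith
  set m := ∑ t, min (p t) (q t) with hm_def
  have hminpos : ∀ t, 0 < min (p t) (q t) := fun t => lt_min (hppos t) (hqpos t)
  have hm1 : m ≤ 1 := by
    rw [hm_def, ← hpsum]; exact Finset.sum_le_sum fun t _ => min_le_left _ _
  -- lower bound on overlap
  have hmlow : Real.exp (-a) ≤ m := by
    set M := max (∑ s, w (X s)) (∑ s, w (Y s)) with hM_def
    have hM : 0 < M := lt_max_iff.mpr (Or.inl hU)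
    have hS1 : Real.exp (-a) * (∑ s, w (X s)) ≤ ∑ t, min (w (X t)) (w (Y t)) := by
      rw [Finset.mul_sum]
      exact Finset.sum_le_sum fun t _ =>
        le_min (by nlinarith [hwpos (X t)]) ((hedge t).1)
    have hS2 : Real.exp (-a) * (∑ s, w (Y s)) ≤ ∑ t, min (w (X t)) (w (Y t)) := by
      rw [Finset.mul_sum]
      exact Finset.sum_le_sum fun t _ =>
        le_min ((hedge t).2) (by nlinarith [hwpos (Y t)])
    have hSM : Real.exp (-a) * M ≤ ∑ t, min (w (X t)) (w (Y t)) := by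
      rcases le_total (∑ s, w (X s)) (∑ s, w (Y s)) with h | h
      · rw [hM_def, max_eq_right h]; exact hS2
      · rw [hM_def, max_eq_left h]; exact hS1
    have hpt : ∀ t, min (w (X t)) (w (Y t)) / M ≤ min (p t) (q t) := by
      intro t
      refine le_min ?_ ?_
      · rw [hp]
        exact div_le_div₀ (hwpos (X t)).le (min_le_left _ _) hU (le_max_left _ _)
      · rw [hq]
        exact div_le_div₀ (hwpos (Y t)).le (min_le_right _ _) hV (le_max_right _ _)
    calc Real.exp (-a) = Real.exp (-a) * M / M := by field_simp
      _ ≤ (∑ t, min (w (X t)) (w (Y t))) / M := by gcongr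
      _ = ∑ t, min (w (X t)) (w (Y t)) / M := Finset.sum_div _ _ _
      _ ≤ m := Finset.sum_le_sum fun t _ => hpt t
  rcases eq_or_lt_of_le hm1 with hm | hm
  · -- m = 1 : p = q, diagonal coupling
    have hpq : ∀ t, p t = q t := by
      have h0p : ∑ t, (p t - min (p t) (q t)) = 0 := by
        rw [Finset.sum_sub_distrib, hpsum, ← hm_def, hm]; ring
      have h0q : ∑ t, (q t - min (p t) (q t)) = 0 := by
        rw [Finset.sum_sub_distrib, hqsum, ← hm_def, hm]; ring
      intro t
      have h1 := (Finset.sum_eq_zero_iff_of_nonneg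
        (fun t _ => sub_nonneg.mpr (min_le_left (p t) (q t)))).mp h0p t (mem_univ t)
      have h2 := (Finset.sum_eq_zero_iff_of_nonneg
        (fun t _ => sub_nonneg.mpr (min_le_right (p t) (q t)))).mp h0q t (mem_univ t)
      have := min_le_right (p t) (q t)
      have := min_le_left (p t) (q t)
      linarith
    refine ⟨fun z => if z.1 = z.2 then p z.1 else 0, ?_, ?_, ?_, ?_⟩
    · intro z; dsimp only; split
      · exact (hppos _).le
      · exact le_refl 0
    · intro s; simp [Finset.sum_ite_eq]
    · intro t; rw [← hpq t]; simp [Finset.sum_ite_eq']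
    · have hcost : ∑ s, ∑ t, (if s = t then p s else 0) * (dCay (X s) (Y t) : ℝ)
          = ∑ s, p s * (dCay (X s) (Y s) : ℝ) := by
        refine Finset.sum_congr rfl fun s _ => ?_
        simp [ite_mul, Finset.sum_ite_eq]
      rw [hcost]
      have h1 : ∑ s, p s * (dCay (X s) (Y s) : ℝ) ≤ ∑ s, p s * 1 := by
        gcongr with s
        · exact (hppos s).le
        · exact hd1 s
      have h2 : (0:ℝ) ≤ (D - 1) * Real.tanh a := by
        have : 0 ≤ Real.tanh a := by nlinarith
        nlinarith
      simp only [mul_one] at h1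
      rw [hpsum] at h1
      linarith
  · -- m < 1 : mixture coupling
    have hm0 : 0 < 1 - m := by linarith
    have hr : ∑ t, (p t - min (p t) (q t)) = 1 - m := by
      rw [Finset.sum_sub_distrib, hpsum, ← hm_def]
    have hc : ∑ t, (q t - min (p t) (q t)) = 1 - m := by
      rw [Finset.sum_sub_distrib, hqsum, ← hm_def]
    have hrnn : ∀ t, 0 ≤ p t - min (p t) (q t) :=
      fun t => sub_nonneg.mpr (min_le_left _ _)
    have hcnn : ∀ t, 0 ≤ q t - min (p t) (q t) :=
      fun t => sub_nonneg.mpr (min_le_right _ _)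
    have hrow : ∀ x : ℝ, ∑ t, x * (q t - min (p t) (q t)) / (1 - m) = x := by
      intro x
      rw [← Finset.sum_div, ← Finset.mul_sum, hc, mul_div_assoc, div_self hm0.ne',
        mul_one]
    have hcol : ∀ x : ℝ, ∑ s, (p s - min (p s) (q s)) * x / (1 - m) = x := by
      intro x
      rw [← Finset.sum_div, ← Finset.sum_mul, hr, mul_comm, mul_div_assoc,
        div_self hm0.ne', mul_one]
    refine ⟨fun z => (if z.1 = z.2 then min (p z.1) (q z.1) else 0)
        + (p z.1 - min (p z.1) (q z.1)) * (q z.2 - min (p z.2) (q z.2)) / (1 - m),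
      ?_, ?_, ?_, ?_⟩
    · intro z; dsimp only
      have h2 : 0 ≤ (p z.1 - min (p z.1) (q z.1)) * (q z.2 - min (p z.2) (q z.2)) / (1 - m) :=
        div_nonneg (mul_nonneg (hrnn _) (hcnn _)) hm0.le
      split
      · exact add_nonneg (hminpos _).le h2
      · simpa using h2
    · intro s
      rw [Finset.sum_add_distrib]
      rw [hrow (p s - min (p s) (q s))]
      simp [Finset.sum_ite_eq]
    · intro t
      rw [Finset.sum_add_distrib]
      rw [hcol (q t - min (p t) (q t))]
      have : ∑ s, (if s = t then min (p s) (q s) else 0) = min (p t) (q t) := by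
        simp [Finset.sum_ite_eq']
      rw [this]; ring
    · have hsplit : ∑ s, ∑ t, ((if s = t then min (p s) (q s) else 0)
            + (p s - min (p s) (q s)) * (q t - min (p t) (q t)) / (1 - m))
            * (dCay (X s) (Y t) : ℝ)
          = (∑ s, ∑ t, (if s = t then min (p s) (q s) else 0) * (dCay (X s) (Y t) : ℝ))
          + ∑ s, ∑ t, (p s - min (p s) (q s)) * (q t - min (p t) (q t)) / (1 - m)
              * (dCay (X s) (Y t) : ℝ) := by
        rw [← Finset.sum_add_distrib]
        refine Finset.sum_congr rfl fun s _ => ?_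
        rw [← Finset.sum_add_distrib]
        refine Finset.sum_congr rfl fun t _ => ?_
        ring
      rw [hsplit]
      have hA : ∑ s, ∑ t, (if s = t then min (p s) (q s) else 0) * (dCay (X s) (Y t) : ℝ)
          ≤ m := by
        have : ∑ s, ∑ t, (if s = t then min (p s) (q s) else 0) * (dCay (X s) (Y t) : ℝ)
            = ∑ s, min (p s) (q s) * (dCay (X s) (Y s) : ℝ) := by
          refine Finset.sum_congr rfl fun s _ => ?_
          simp [ite_mul, Finset.sum_ite_eq]
        rw [this, hm_def]
        calc ∑ s, min (p s) (q s) * (dCay (X s) (Y s) : ℝ)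
            ≤ ∑ s, min (p s) (q s) * 1 := by
              gcongr with s
              · exact (hminpos s).le
              · exact hd1 s
          _ = ∑ s, min (p s) (q s) := by simp
      have hB : ∑ s, ∑ t, (p s - min (p s) (q s)) * (q t - min (p t) (q t)) / (1 - m)
            * (dCay (X s) (Y t) : ℝ) ≤ (1 - m) * D := by
        have step1 : ∑ s, ∑ t, (p s - min (p s) (q s)) * (q t - min (p t) (q t)) / (1 - m)
              * (dCay (X s) (Y t) : ℝ)
            ≤ ∑ s, ∑ t, (p s - min (p s) (q s)) * (q t - min (p t) (q t)) / (1 - m) * D := by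
          gcongr with s _ t
          · exact div_nonneg (mul_nonneg (hrnn _) (hcnn _)) hm0.le
          · exact hcross s t
        refine step1.trans ?_
        have step2 : ∀ s, ∑ t, (p s - min (p s) (q s)) * (q t - min (p t) (q t)) / (1 - m) * D
            = (p s - min (p s) (q s)) * D := by
          intro s
          rw [← Finset.sum_mul, hrow (p s - min (p s) (q s))]
        rw [Finset.sum_congr rfl fun s _ => step2 s, ← Finset.sum_mul, hr]
      have hfinal : m + (1 - m) * D ≤ 1 + (D - 1) * Real.tanh a := by
        have h1m : 1 - m ≤ Real.tanh a := le_trans (by linarith) htanh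
        nlinarith [mul_le_mul_of_nonneg_left h1m (show (0:ℝ) ≤ D - 1 by linarith)]
      linarith
end

section
/- Suppose that for every edge {u,v} ∈ E there exists a coupling ν_{uv} of K(u,·) and K(v,·) (a probability mass function on X×X with marginals K(u,·) and K(v,·)) such that Σ_{x,y} ν_{uv}(x,y)·d(x,y) ≤ e^{−α}·d(u,v) for some fixed α > 0. Then for all t ≥ 0 and all x ∈ X, the total variation distance satisfies ‖K^t(x,·) − π‖_TV ≤ e^{−αt}·diam(X,d), where diam(X,d) = max_{x,y∈X} d(x,y) and K^t denotes the t-step kernel. -/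
open Finset

/-- The weight of a walk: the sum of the edge lengths `l` along its darts. -/
noncomputable def walkWeight {X : Type*} {G : SimpleGraph X} (l : X → X → ℝ)
    {x y : X} (wk : G.Walk x y) : ℝ :=
  (wk.darts.map fun d => l d.fst d.snd).sum

/-- The shortest-path metric induced on `X` by the graph `G` with edge lengths `l`. -/
noncomputable def pathDist {X : Type*} (G : SimpleGraph X) (l : X → X → ℝ)
    (x y : X) : ℝ :=
  sInf {c : ℝ | ∃ wk : G.Walk x y, c = walkWeight l wk}

/-- The `t`-step transition kernel of `K`. -/
noncomputable def kpow {X : Type*} [Fintype X] [DecidableEq X]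
    (K : X → X → ℝ) : ℕ → X → X → ℝ
  | 0 => fun x y => if x = y then 1 else 0
  | (t + 1) => fun x y => ∑ z, K x z * kpow K t z y

section PCA

variable {X : Type*} {G : SimpleGraph X} {l : X → X → ℝ}

lemma ww_nil (x : X) : walkWeight l (SimpleGraph.Walk.nil : G.Walk x x) = 0 := by
  simp [walkWeight]

lemma ww_cons {x y z : X} (h : G.Adj x y) (p : G.Walk y z) :
    walkWeight l (SimpleGraph.Walk.cons h p) = l x y + walkWeight l p := by
  simp [walkWeight]

lemma ww_append {x y z : X} (p : G.Walk x y) (q : G.Walk y z) :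
    walkWeight l (p.append q) = walkWeight l p + walkWeight l q := by
  simp [walkWeight, SimpleGraph.Walk.darts_append]

lemma ww_reverse (hlsymm : ∀ u v, l u v = l v u) {x y : X} (p : G.Walk x y) :
    walkWeight l p.reverse = walkWeight l p := by
  simp only [walkWeight, SimpleGraph.Walk.darts_reverse, List.map_reverse, List.sum_reverse,
    List.map_map]
  congr 1
  apply List.map_congr_left
  intro d _
  simp [Function.comp, SimpleGraph.Dart.symm, hlsymm]

lemma list_toFinset_sum_le {A : Type*} [DecidableEq A] (f : A → ℝ) (hf : ∀ a, 0 ≤ f a) :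
    ∀ L : List A, ∑ a ∈ L.toFinset, f a ≤ (L.map f).sum := by
  intro L
  induction L with
  | nil => simp
  | cons a L ih =>
    simp only [List.toFinset_cons, List.map_cons, List.sum_cons]
    by_cases h : a ∈ L.toFinset
    · rw [Finset.insert_eq_self.mpr h]
      have := hf a
      linarith
    · rw [Finset.sum_insert h]
      linarith

variable (hl1 : ∀ u v, G.Adj u v → 1 ≤ l u v)
include hl1

lemma ww_nonneg {x y : X} (p : G.Walk x y) : 0 ≤ walkWeight l p := by
  induction p with
  | nil => simp [ww_nil]
  | cons h p ih =>
    rw [ww_cons]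
    have := hl1 _ _ h
    linarith

lemma one_le_ww {x y : X} (hxy : x ≠ y) (p : G.Walk x y) : 1 ≤ walkWeight l p := by
  cases p with
  | nil => exact absurd rfl hxy
  | cons h q =>
    rw [ww_cons]
    have := hl1 _ _ h
    have := ww_nonneg hl1 q
    linarith

lemma pd_bddBelow (x y : X) :
    BddBelow {c : ℝ | ∃ wk : G.Walk x y, c = walkWeight l wk} :=
  ⟨0, fun _ ⟨wk, hc⟩ => hc ▸ ww_nonneg hl1 wk⟩

lemma pd_le_ww {x y : X} (p : G.Walk x y) : pathDist G l x y ≤ walkWeight l p :=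
  csInf_le (pd_bddBelow hl1 x y) ⟨p, rfl⟩

lemma pd_self (x : X) : pathDist G l x x = 0 := by
  refine le_antisymm ?_ ?_
  · simpa [ww_nil] using pd_le_ww hl1 (SimpleGraph.Walk.nil : G.Walk x x)
  · exact le_csInf ⟨walkWeight l (SimpleGraph.Walk.nil : G.Walk x x), SimpleGraph.Walk.nil, rfl⟩
      (fun _ ⟨wk, hc⟩ => hc ▸ ww_nonneg hl1 wk)

lemma pd_le_l {x y : X} (h : G.Adj x y) : pathDist G l x y ≤ l x y := by
  have := pd_le_ww hl1 (SimpleGraph.Walk.cons h SimpleGraph.Walk.nil)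
  rwa [ww_cons, ww_nil, add_zero] at this

variable (hconn : G.Connected)
include hconn

lemma pd_nonneg (x y : X) : 0 ≤ pathDist G l x y := by
  obtain ⟨p⟩ := hconn x y
  exact le_csInf ⟨walkWeight l p, p, rfl⟩ (fun _ ⟨wk, hc⟩ => hc ▸ ww_nonneg hl1 wk)

lemma one_le_pd {x y : X} (hxy : x ≠ y) : 1 ≤ pathDist G l x y := by
  obtain ⟨p⟩ := hconn x y
  exact le_csInf ⟨walkWeight l p, p, rfl⟩ (fun _ ⟨wk, hc⟩ => hc ▸ one_le_ww hl1 hxy wk)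

lemma pd_symm (hlsymm : ∀ u v, l u v = l v u) (x y : X) :
    pathDist G l x y = pathDist G l y x := by
  have key : ∀ a b : X, pathDist G l a b ≤ pathDist G l b a := by
    intro a b
    obtain ⟨p⟩ := hconn b a
    refine le_csInf ⟨walkWeight l p, p, rfl⟩ ?_
    rintro c ⟨wk, rfl⟩
    calc pathDist G l a b ≤ walkWeight l wk.reverse := pd_le_ww hl1 wk.reverse
      _ = walkWeight l wk := ww_reverse hlsymm wk
  exact le_antisymm (key x y) (key y x)

lemma pd_triangle (x y z : X) :
    pathDist G l x z ≤ pathDist G l x y + pathDist G l y z := by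
  obtain ⟨p⟩ := hconn x y
  obtain ⟨q⟩ := hconn y z
  have h1 : ∀ p' : G.Walk x y, pathDist G l x z - walkWeight l p' ≤ pathDist G l y z := by
    intro p'
    refine le_csInf ⟨walkWeight l q, q, rfl⟩ ?_
    rintro c ⟨q', rfl⟩
    have := pd_le_ww hl1 (p'.append q')
    rw [ww_append] at this
    linarith
  have h2 : pathDist G l x z - pathDist G l y z ≤ pathDist G l x y := by
    refine le_csInf ⟨walkWeight l p, p, rfl⟩ ?_
    rintro c ⟨p', rfl⟩
    have := h1 p'
    linarith
  linarith

lemma ww_bypass_le [DecidableEq X] {x y : X}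
    (p : G.Walk x y) : walkWeight l p.bypass ≤ walkWeight l p := by
  have hl0 : ∀ a b, G.Adj a b → 0 ≤ l a b := fun a b h => le_trans zero_le_one (hl1 a b h)
  have hnd : p.bypass.darts.Nodup :=
    SimpleGraph.Walk.darts_nodup_of_support_nodup (p.bypass_isPath).support_nodup
  have hsub := p.darts_bypass_subset
  have hf : ∀ d : G.Dart, 0 ≤ l d.fst d.snd := fun d => hl0 _ _ d.adj
  calc walkWeight l p.bypass = ∑ d ∈ p.bypass.darts.toFinset, l d.fst d.snd := by
        rw [walkWeight, ← List.sum_toFinset _ hnd]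
    _ ≤ ∑ d ∈ p.darts.toFinset, l d.fst d.snd := by
        apply Finset.sum_le_sum_of_subset_of_nonneg
        · intro d hd
          rw [List.mem_toFinset] at hd ⊢
          exact hsub hd
        · intro d _ _
          exact hf d
    _ ≤ _ := list_toFinset_sum_le _ hf _

lemma exists_min_walk [Fintype X] [DecidableEq X] (u v : X) :
    ∃ wk : G.Walk u v, walkWeight l wk = pathDist G l u v := by
  classical
  obtain ⟨w0⟩ := hconn u v
  have hne : (Finset.univ : Finset (G.Path u v)).Nonempty :=
    ⟨⟨w0.bypass, w0.bypass_isPath⟩, Finset.mem_univ _⟩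
  obtain ⟨p0, _, hp0⟩ := Finset.exists_min_image Finset.univ
    (fun p : G.Path u v => walkWeight l p.1) hne
  refine ⟨p0.1, le_antisymm ?_ (pd_le_ww hl1 p0.1)⟩
  refine le_csInf ⟨walkWeight l w0, ⟨w0, rfl⟩⟩ ?_
  rintro c ⟨wk, rfl⟩
  calc walkWeight l (p0.1 : G.Walk u v)
      ≤ walkWeight l wk.bypass := hp0 ⟨wk.bypass, wk.bypass_isPath⟩ (Finset.mem_univ _)
    _ ≤ walkWeight l wk := ww_bypass_le hl1 hconn wk


end PCA


lemma glue_coupling {X : Type*} [Fintype X] (d : X → X → ℝ)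
    (hd : ∀ x y z, d x z ≤ d x y + d y z)
    (p q r : X → ℝ) (ν1 ν2 : X × X → ℝ)
    (h10 : ∀ z, 0 ≤ ν1 z) (h11 : ∀ x, ∑ y, ν1 (x, y) = p x) (h12 : ∀ y, ∑ x, ν1 (x, y) = q y)
    (h20 : ∀ z, 0 ≤ ν2 z) (h21 : ∀ x, ∑ y, ν2 (x, y) = q x) (h22 : ∀ y, ∑ x, ν2 (x, y) = r y) :
    ∃ ν : X × X → ℝ, (∀ z, 0 ≤ ν z) ∧ (∀ x, ∑ y, ν (x, y) = p x) ∧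
      (∀ y, ∑ x, ν (x, y) = r y) ∧
      ∑ x, ∑ y, ν (x, y) * d x y ≤
        (∑ x, ∑ y, ν1 (x, y) * d x y) + (∑ x, ∑ y, ν2 (x, y) * d x y) := by
  classical
  have hq0 : ∀ y, 0 ≤ q y := fun y => (h12 y) ▸ Finset.sum_nonneg fun x _ => h10 (x, y)
  set g : X → ℝ := fun y => if q y = 0 then 0 else 1 / q y with hg
  have hg0 : ∀ y, 0 ≤ g y := by
    intro y
    simp only [hg]
    split
    · exact le_refl 0
    · exact one_div_nonneg.mpr (hq0 y)
  have hz1 : ∀ x y, q y = 0 → ν1 (x, y) = 0 := by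
    intro x y hy
    have h1 : ν1 (x, y) ≤ ∑ x', ν1 (x', y) :=
      Finset.single_le_sum (fun x' _ => h10 (x', y)) (Finset.mem_univ x)
    rw [h12, hy] at h1
    exact le_antisymm h1 (h10 (x, y))
  have hz2 : ∀ y z, q y = 0 → ν2 (y, z) = 0 := by
    intro y z hy
    have h1 : ν2 (y, z) ≤ ∑ z', ν2 (y, z') :=
      Finset.single_le_sum (fun z' _ => h20 (y, z')) (Finset.mem_univ z)
    rw [h21, hy] at h1
    exact le_antisymm h1 (h20 (y, z))
  have key1 : ∀ x y, ν1 (x, y) * (g y * q y) = ν1 (x, y) := by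
    intro x y
    by_cases hy : q y = 0
    · rw [hz1 x y hy]; ring
    · have : g y * q y = 1 := by simp only [hg, if_neg hy]; field_simp
      rw [this, mul_one]
  have key2 : ∀ y z, ν2 (y, z) * (g y * q y) = ν2 (y, z) := by
    intro y z
    by_cases hy : q y = 0
    · rw [hz2 y z hy]; ring
    · have : g y * q y = 1 := by simp only [hg, if_neg hy]; field_simp
      rw [this, mul_one]
  refine ⟨fun w => ∑ y, ν1 (w.1, y) * ν2 (y, w.2) * g y, ?_, ?_, ?_, ?_⟩
  · intro z
    exact Finset.sum_nonneg fun y _ =>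
      mul_nonneg (mul_nonneg (h10 _) (h20 _)) (hg0 y)
  · intro x
    calc ∑ z, ∑ y, ν1 (x, y) * ν2 (y, z) * g y
        = ∑ y, ∑ z, ν1 (x, y) * ν2 (y, z) * g y := Finset.sum_comm
      _ = ∑ y, ν1 (x, y) * g y * ∑ z, ν2 (y, z) := by
          refine Finset.sum_congr rfl fun y _ => ?_
          rw [Finset.mul_sum]
          exact Finset.sum_congr rfl fun z _ => by ring
      _ = ∑ y, ν1 (x, y) * (g y * q y) := by
          refine Finset.sum_congr rfl fun y _ => ?_
          rw [h21]; ring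
      _ = ∑ y, ν1 (x, y) := Finset.sum_congr rfl fun y _ => key1 x y
      _ = p x := h11 x
  · intro z
    calc ∑ x, ∑ y, ν1 (x, y) * ν2 (y, z) * g y
        = ∑ y, ∑ x, ν1 (x, y) * ν2 (y, z) * g y := Finset.sum_comm
      _ = ∑ y, ν2 (y, z) * g y * ∑ x, ν1 (x, y) := by
          refine Finset.sum_congr rfl fun y _ => ?_
          rw [Finset.mul_sum]
          exact Finset.sum_congr rfl fun x _ => by ring
      _ = ∑ y, ν2 (y, z) * (g y * q y) := by
          refine Finset.sum_congr rfl fun y _ => ?_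
          rw [h12]; ring
      _ = ∑ y, ν2 (y, z) := Finset.sum_congr rfl fun y _ => key2 y z
      _ = r z := h22 z
  · calc ∑ x, ∑ z, (∑ y, ν1 (x, y) * ν2 (y, z) * g y) * d x z
        = ∑ x, ∑ z, ∑ y, ν1 (x, y) * ν2 (y, z) * g y * d x z := by
          refine Finset.sum_congr rfl fun x _ => Finset.sum_congr rfl fun z _ => ?_
          rw [Finset.sum_mul]
      _ ≤ ∑ x, ∑ z, ∑ y, ν1 (x, y) * ν2 (y, z) * g y * (d x y + d y z) := by
          refine Finset.sum_le_sum fun x _ => Finset.sum_le_sum fun z _ =>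
            Finset.sum_le_sum fun y _ => ?_
          exact mul_le_mul_of_nonneg_left (hd x y z)
            (mul_nonneg (mul_nonneg (h10 _) (h20 _)) (hg0 y))
      _ = (∑ x, ∑ z, ∑ y, ν1 (x, y) * ν2 (y, z) * g y * d x y)
          + (∑ x, ∑ z, ∑ y, ν1 (x, y) * ν2 (y, z) * g y * d y z) := by
          rw [← Finset.sum_add_distrib]
          refine Finset.sum_congr rfl fun x _ => ?_
          rw [← Finset.sum_add_distrib]
          refine Finset.sum_congr rfl fun z _ => ?_
          rw [← Finset.sum_add_distrib]
          exact Finset.sum_congr rfl fun y _ => by ring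
      _ = (∑ x, ∑ y, ν1 (x, y) * d x y) + (∑ x, ∑ y, ν2 (x, y) * d x y) := by
          congr 1
          · calc ∑ x, ∑ z, ∑ y, ν1 (x, y) * ν2 (y, z) * g y * d x y
                = ∑ x, ∑ y, ∑ z, ν1 (x, y) * ν2 (y, z) * g y * d x y := by
                  exact Finset.sum_congr rfl fun x _ => Finset.sum_comm
              _ = ∑ x, ∑ y, ν1 (x, y) * d x y * g y * ∑ z, ν2 (y, z) := by
                  refine Finset.sum_congr rfl fun x _ => Finset.sum_congr rfl fun y _ => ?_
                  rw [Finset.mul_sum]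
                  exact Finset.sum_congr rfl fun z _ => by ring
              _ = ∑ x, ∑ y, ν1 (x, y) * (g y * q y) * d x y := by
                  refine Finset.sum_congr rfl fun x _ => Finset.sum_congr rfl fun y _ => ?_
                  rw [h21]; ring
              _ = ∑ x, ∑ y, ν1 (x, y) * d x y := by
                  refine Finset.sum_congr rfl fun x _ => Finset.sum_congr rfl fun y _ => ?_
                  rw [key1]
          · calc ∑ x, ∑ z, ∑ y, ν1 (x, y) * ν2 (y, z) * g y * d y z
                = ∑ z, ∑ y, ∑ x, ν1 (x, y) * ν2 (y, z) * g y * d y z := by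
                  rw [Finset.sum_comm]
                  exact Finset.sum_congr rfl fun z _ => Finset.sum_comm
              _ = ∑ z, ∑ y, ν2 (y, z) * g y * d y z * ∑ x, ν1 (x, y) := by
                  refine Finset.sum_congr rfl fun z _ => Finset.sum_congr rfl fun y _ => ?_
                  rw [Finset.mul_sum]
                  exact Finset.sum_congr rfl fun x _ => by ring
              _ = ∑ z, ∑ y, ν2 (y, z) * (g y * q y) * d y z := by
                  refine Finset.sum_congr rfl fun z _ => Finset.sum_congr rfl fun y _ => ?_
                  rw [h12]; ring
              _ = ∑ z, ∑ y, ν2 (y, z) * d y z := by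
                  refine Finset.sum_congr rfl fun z _ => Finset.sum_congr rfl fun y _ => ?_
                  rw [key2]
              _ = ∑ y, ∑ z, ν2 (y, z) * d y z := Finset.sum_comm


lemma tv_le_cost {X : Type*} [Fintype X] [DecidableEq X] (d : X → X → ℝ)
    (hd0 : ∀ x, d x x = 0) (hd1 : ∀ x y, x ≠ y → 1 ≤ d x y)
    (hdsymm : ∀ x y, d x y = d y x)
    (μ : X × X → ℝ) (p q : X → ℝ) (h0 : ∀ z, 0 ≤ μ z)
    (h1 : ∀ x, ∑ y, μ (x, y) = p x) (h2 : ∀ y, ∑ x, μ (x, y) = q y) :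
    (1 / 2) * ∑ a, |p a - q a| ≤ ∑ x, ∑ y, μ (x, y) * d x y := by
  have habs : ∀ a, |p a - q a| ≤ ∑ y, |μ (a, y) - μ (y, a)| := by
    intro a
    have h : p a - q a = ∑ y, (μ (a, y) - μ (y, a)) := by
      rw [Finset.sum_sub_distrib, h1, h2]
    rw [h]
    exact Finset.abs_sum_le_sum_abs _ _
  have hterm : ∀ a y, |μ (a, y) - μ (y, a)| ≤ (μ (a, y) + μ (y, a)) * d a y := by
    intro a y
    by_cases hay : a = y
    · subst hay; simp [hd0]
    · calc |μ (a, y) - μ (y, a)| ≤ μ (a, y) + μ (y, a) := by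
            have := h0 (a, y); have := h0 (y, a)
            rw [abs_sub_le_iff]; constructor <;> linarith
        _ ≤ (μ (a, y) + μ (y, a)) * d a y :=
            le_mul_of_one_le_right (by have := h0 (a, y); have := h0 (y, a); linarith)
              (hd1 a y hay)
  have hmain : ∑ a, |p a - q a| ≤ 2 * ∑ x, ∑ y, μ (x, y) * d x y := by
    calc ∑ a, |p a - q a| ≤ ∑ a, ∑ y, |μ (a, y) - μ (y, a)| :=
          Finset.sum_le_sum fun a _ => habs a
      _ ≤ ∑ a, ∑ y, (μ (a, y) + μ (y, a)) * d a y :=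
          Finset.sum_le_sum fun a _ => Finset.sum_le_sum fun y _ => hterm a y
      _ = (∑ a, ∑ y, μ (a, y) * d a y) + (∑ a, ∑ y, μ (y, a) * d a y) := by
          rw [← Finset.sum_add_distrib]
          refine Finset.sum_congr rfl fun a _ => ?_
          rw [← Finset.sum_add_distrib]
          exact Finset.sum_congr rfl fun y _ => by ring
      _ = 2 * ∑ x, ∑ y, μ (x, y) * d x y := by
          have : ∑ a, ∑ y, μ (y, a) * d a y = ∑ x, ∑ y, μ (x, y) * d x y := by
            rw [Finset.sum_comm]
            exact Finset.sum_congr rfl fun y _ => Finset.sum_congr rfl fun a _ => by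
              rw [hdsymm a y]
          rw [this]; ring
  linarith

lemma stat_iter {X : Type*} [Fintype X] [DecidableEq X] (K : X → X → ℝ) (π : X → ℝ)
    (hstat : ∀ y, ∑ x, π x * K x y = π y) :
    ∀ t a, ∑ y, π y * kpow K t y a = π a := by
  intro t
  induction t with
  | zero =>
    intro a
    simp [kpow]
  | succ t ih =>
    intro a
    calc ∑ y, π y * kpow K (t + 1) y a
        = ∑ y, ∑ z, π y * (K y z * kpow K t z a) := by
          refine Finset.sum_congr rfl fun y _ => ?_
          rw [show kpow K (t+1) y a = ∑ z, K y z * kpow K t z a from rfl, Finset.mul_sum]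
      _ = ∑ z, (∑ y, π y * K y z) * kpow K t z a := by
          rw [Finset.sum_comm]
          refine Finset.sum_congr rfl fun z _ => ?_
          rw [Finset.sum_mul]
          exact Finset.sum_congr rfl fun y _ => by ring
      _ = ∑ z, π z * kpow K t z a := by
          exact Finset.sum_congr rfl fun z _ => by rw [hstat]
      _ = π a := ih a

section Couple
variable {X : Type*} [Fintype X] [DecidableEq X] {G : SimpleGraph X} {l : X → X → ℝ}
  {K : X → X → ℝ} {α : ℝ}

lemma walk_coupling
    (hl1 : ∀ u v, G.Adj u v → 1 ≤ l u v) (hconn : G.Connected)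
    (hK0 : ∀ x y, 0 ≤ K x y)
    (hcouple : ∀ u v, G.Adj u v → ∃ ν : X × X → ℝ,
      (∀ z, 0 ≤ ν z) ∧
      (∀ x, ∑ y, ν (x, y) = K u x) ∧
      (∀ y, ∑ x, ν (x, y) = K v y) ∧
      ∑ x, ∑ y, ν (x, y) * pathDist G l x y ≤ Real.exp (-α) * pathDist G l u v)
    {u v : X} (wk : G.Walk u v) :
    ∃ ν : X × X → ℝ, (∀ z, 0 ≤ ν z) ∧
      (∀ x, ∑ y, ν (x, y) = K u x) ∧ (∀ y, ∑ x, ν (x, y) = K v y) ∧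
      ∑ x, ∑ y, ν (x, y) * pathDist G l x y ≤ Real.exp (-α) * walkWeight l wk := by
  induction wk with
  | nil =>
    rename_i u
    refine ⟨fun w => if w.1 = w.2 then K u w.1 else 0, ?_, ?_, ?_, ?_⟩
    · intro z
      dsimp only
      split
      · exact hK0 u z.1
      · exact le_refl 0
    · intro x; simp
    · intro y; simp
    · have : ∀ x : X, ∑ y, (if x = y then K u x else 0) * pathDist G l x y = 0 := by
        intro x
        rw [Finset.sum_eq_zero]
        intro y _
        by_cases h : x = y
        · subst h; rw [pd_self hl1]; ring
        · simp [h]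
      rw [Finset.sum_congr rfl fun x _ => this x]
      simp [ww_nil]
  | cons h p ih =>
    rename_i a b c
    obtain ⟨ν1, h10, h11, h12, h13⟩ := hcouple a b h
    obtain ⟨ν2, h20, h21, h22, h23⟩ := ih
    obtain ⟨ν, hν0, hν1, hν2, hν3⟩ := glue_coupling (pathDist G l)
      (pd_triangle hl1 hconn) (K a) (K b) (K c) ν1 ν2 h10 h11 h12 h20 h21 h22
    refine ⟨ν, hν0, hν1, hν2, ?_⟩
    have hexp : (0:ℝ) ≤ Real.exp (-α) := (Real.exp_pos _).le
    have hpd : pathDist G l a b ≤ l a b := pd_le_l hl1 h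
    calc ∑ x, ∑ y, ν (x, y) * pathDist G l x y
        ≤ (∑ x, ∑ y, ν1 (x, y) * pathDist G l x y)
          + (∑ x, ∑ y, ν2 (x, y) * pathDist G l x y) := hν3
      _ ≤ Real.exp (-α) * pathDist G l a b + Real.exp (-α) * walkWeight l p := by linarith
      _ ≤ Real.exp (-α) * l a b + Real.exp (-α) * walkWeight l p := by nlinarith
      _ = Real.exp (-α) * walkWeight l (SimpleGraph.Walk.cons h p) := by
          rw [ww_cons]; ring


lemma kpow_coupling
    (hl1 : ∀ u v, G.Adj u v → 1 ≤ l u v) (hconn : G.Connected)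
    (hK1 : ∀ x, ∑ y, K x y = 1)
    (hpair : ∀ u v : X, ∃ ν : X × X → ℝ, (∀ z, 0 ≤ ν z) ∧
      (∀ x, ∑ y, ν (x, y) = K u x) ∧ (∀ y, ∑ x, ν (x, y) = K v y) ∧
      ∑ x, ∑ y, ν (x, y) * pathDist G l x y ≤ Real.exp (-α) * pathDist G l u v) :
    ∀ (t : ℕ) (u v : X), ∃ μ : X × X → ℝ, (∀ z, 0 ≤ μ z) ∧
      (∀ x, ∑ y, μ (x, y) = kpow K t u x) ∧ (∀ y, ∑ x, μ (x, y) = kpow K t v y) ∧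
      ∑ x, ∑ y, μ (x, y) * pathDist G l x y ≤ Real.exp (-α) ^ t * pathDist G l u v := by
  intro t
  induction t with
  | zero =>
    intro u v
    refine ⟨fun w => (if w.1 = u then 1 else 0) * (if w.2 = v then 1 else 0), ?_, ?_, ?_, ?_⟩
    · intro z; positivity
    · intro x
      dsimp only
      rw [← Finset.mul_sum (s := Finset.univ) (a := if x = u then (1:ℝ) else 0)
        (f := fun y => if y = v then (1:ℝ) else 0)]
      simp [kpow, eq_comm]
    · intro y
      dsimp only
      rw [← Finset.sum_mul (s := Finset.univ) (a := if y = v then (1:ℝ) else 0)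
        (f := fun x => if x = u then (1:ℝ) else 0)]
      simp [kpow, eq_comm]
    · dsimp only
      have h1 : ∀ x : X, ∑ y, ((if x = u then (1:ℝ) else 0) * (if y = v then 1 else 0))
            * pathDist G l x y = (if x = u then 1 else 0) * pathDist G l x v := by
        intro x
        rw [Finset.sum_eq_single v]
        · simp
        · intro b _ hb; simp [hb]
        · simp
      rw [Finset.sum_congr rfl fun x _ => h1 x, Finset.sum_eq_single u]
      · simp
      · intro b _ hb; simp [hb]
      · simp
  | succ t ih =>
    intro u v
    obtain ⟨ν, hν0, hν1, hν2, hν3⟩ := hpair u v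
    choose μt hμ0 hμ1 hμ2 hμ3 using ih
    refine ⟨fun w => ∑ a, ∑ b, ν (a, b) * μt a b w, ?_, ?_, ?_, ?_⟩
    · intro z
      exact Finset.sum_nonneg fun a _ => Finset.sum_nonneg fun b _ =>
        mul_nonneg (hν0 _) (hμ0 a b z)
    · intro x
      calc ∑ y, ∑ a, ∑ b, ν (a, b) * μt a b (x, y)
          = ∑ a, ∑ b, ∑ y, ν (a, b) * μt a b (x, y) := by
            rw [Finset.sum_comm]
            exact Finset.sum_congr rfl fun a _ => Finset.sum_comm
        _ = ∑ a, ∑ b, ν (a, b) * kpow K t a x := by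
            refine Finset.sum_congr rfl fun a _ => Finset.sum_congr rfl fun b _ => ?_
            rw [← Finset.mul_sum, hμ1]
        _ = ∑ a, K u a * kpow K t a x := by
            refine Finset.sum_congr rfl fun a _ => ?_
            rw [← Finset.sum_mul]
            congr 1
            exact hν1 a
        _ = kpow K (t + 1) u x := rfl
    · intro y
      calc ∑ x, ∑ a, ∑ b, ν (a, b) * μt a b (x, y)
          = ∑ a, ∑ b, ∑ x, ν (a, b) * μt a b (x, y) := by
            rw [Finset.sum_comm]
            exact Finset.sum_congr rfl fun a _ => Finset.sum_comm
        _ = ∑ a, ∑ b, ν (a, b) * kpow K t b y := by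
            refine Finset.sum_congr rfl fun a _ => Finset.sum_congr rfl fun b _ => ?_
            rw [← Finset.mul_sum, hμ2]
        _ = ∑ b, K v b * kpow K t b y := by
            rw [Finset.sum_comm]
            refine Finset.sum_congr rfl fun b _ => ?_
            rw [← Finset.sum_mul, hν2]
        _ = kpow K (t + 1) v y := rfl
    · have hexp : (0:ℝ) ≤ Real.exp (-α) ^ t := by positivity
      calc ∑ x, ∑ y, (∑ a, ∑ b, ν (a, b) * μt a b (x, y)) * pathDist G l x y
          = ∑ x, ∑ y, ∑ a, ∑ b, ν (a, b) * μt a b (x, y) * pathDist G l x y := by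
            refine Finset.sum_congr rfl fun x _ => Finset.sum_congr rfl fun y _ => ?_
            rw [Finset.sum_mul]
            exact Finset.sum_congr rfl fun a _ => by rw [Finset.sum_mul]
        _ = ∑ x, ∑ a, ∑ b, ∑ y, ν (a, b) * μt a b (x, y) * pathDist G l x y := by
            refine Finset.sum_congr rfl fun x _ => ?_
            rw [Finset.sum_comm]
            exact Finset.sum_congr rfl fun a _ => Finset.sum_comm
        _ = ∑ a, ∑ x, ∑ b, ∑ y, ν (a, b) * μt a b (x, y) * pathDist G l x y :=
            Finset.sum_comm
        _ = ∑ a, ∑ b, ∑ x, ∑ y, ν (a, b) * μt a b (x, y) * pathDist G l x y :=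
            Finset.sum_congr rfl fun a _ => Finset.sum_comm
        _ = ∑ a, ∑ b, ν (a, b) * ∑ x, ∑ y, μt a b (x, y) * pathDist G l x y := by
            refine Finset.sum_congr rfl fun a _ => Finset.sum_congr rfl fun b _ => ?_
            rw [Finset.mul_sum]
            refine Finset.sum_congr rfl fun x _ => ?_
            rw [Finset.mul_sum]
            exact Finset.sum_congr rfl fun y _ => by ring
        _ ≤ ∑ a, ∑ b, ν (a, b) * (Real.exp (-α) ^ t * pathDist G l a b) := by
            refine Finset.sum_le_sum fun a _ => Finset.sum_le_sum fun b _ =>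
              mul_le_mul_of_nonneg_left (hμ3 a b) (hν0 _)
        _ = Real.exp (-α) ^ t * ∑ a, ∑ b, ν (a, b) * pathDist G l a b := by
            rw [Finset.mul_sum]
            refine Finset.sum_congr rfl fun a _ => ?_
            rw [Finset.mul_sum]
            exact Finset.sum_congr rfl fun b _ => by ring
        _ ≤ Real.exp (-α) ^ t * (Real.exp (-α) * pathDist G l u v) :=
            mul_le_mul_of_nonneg_left hν3 hexp
        _ = Real.exp (-α) ^ (t + 1) * pathDist G l u v := by ring

end Couple

/-- **Path coupling theorem (Bubley–Dyer).**
Let `G = (X, E)` be a finite connected graph with edge lengths `l ≥ 1` and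
induced shortest-path metric `d`, and let `K` be a Markov kernel on `X` with
stationary distribution `π`.  Suppose that for every edge `{u,v}` there exists a
coupling `ν` of `K(u,·)` and `K(v,·)` with
`Σ_{x,y} ν(x,y)·d(x,y) ≤ e^{−α}·d(u,v)` for some fixed `α > 0`.  Then for all
`t ≥ 0` and all `x ∈ X`,
`‖K^t(x,·) − π‖_TV ≤ e^{−αt}·diam(X,d)`. -/
theorem path_coupling {X : Type*} [Fintype X] [DecidableEq X] [Nonempty X]
    (G : SimpleGraph X) (hconn : G.Connected)
    (l : X → X → ℝ) (hlsymm : ∀ u v, l u v = l v u)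
    (hl1 : ∀ u v, G.Adj u v → 1 ≤ l u v)
    (K : X → X → ℝ) (hK0 : ∀ x y, 0 ≤ K x y) (hK1 : ∀ x, ∑ y, K x y = 1)
    (π : X → ℝ) (hπ0 : ∀ x, 0 ≤ π x) (hπ1 : ∑ x, π x = 1)
    (hstat : ∀ y, ∑ x, π x * K x y = π y)
    (α : ℝ) (hα : 0 < α)
    (hcouple : ∀ u v, G.Adj u v → ∃ ν : X × X → ℝ,
      (∀ z, 0 ≤ ν z) ∧
      (∀ x, ∑ y, ν (x, y) = K u x) ∧
      (∀ y, ∑ x, ν (x, y) = K v y) ∧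
      ∑ x, ∑ y, ν (x, y) * pathDist G l x y ≤ Real.exp (-α) * pathDist G l u v) :
    ∀ (t : ℕ) (x : X),
      (1 / 2) * ∑ y, |kpow K t x y - π y|
        ≤ Real.exp (-α * t) * sSup {c : ℝ | ∃ u v : X, c = pathDist G l u v} := by
  intro t x
  have hpair : ∀ u v : X, ∃ ν : X × X → ℝ, (∀ z, 0 ≤ ν z) ∧
      (∀ a, ∑ b, ν (a, b) = K u a) ∧ (∀ b, ∑ a, ν (a, b) = K v b) ∧
      ∑ a, ∑ b, ν (a, b) * pathDist G l a b ≤ Real.exp (-α) * pathDist G l u v := by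
    intro u v
    obtain ⟨wk, hwk⟩ := exists_min_walk hl1 hconn u v
    obtain ⟨ν, h0, h1, h2, h3⟩ := walk_coupling hl1 hconn hK0 hcouple wk
    exact ⟨ν, h0, h1, h2, by rwa [hwk] at h3⟩
  choose μ hμ0 hμ1 hμ2 hμ3 using kpow_coupling hl1 hconn hK1 hpair
  set S := {c : ℝ | ∃ u v : X, c = pathDist G l u v} with hS
  have hSfin : S.Finite := by
    have : S = Set.range (fun p : X × X => pathDist G l p.1 p.2) := by
      ext c
      constructor
      · rintro ⟨u, v, rfl⟩; exact ⟨(u, v), rfl⟩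
      · rintro ⟨⟨u, v⟩, rfl⟩; exact ⟨u, v, rfl⟩
    rw [this]
    exact Set.finite_range _
  have hdiam : ∀ u v : X, pathDist G l u v ≤ sSup S :=
    fun u v => le_csSup hSfin.bddAbove ⟨u, v, rfl⟩
  have htv : ∀ y : X, (1 / 2) * ∑ a, |kpow K t x a - kpow K t y a|
      ≤ Real.exp (-α) ^ t * pathDist G l x y := by
    intro y
    refine le_trans (tv_le_cost (pathDist G l) (pd_self hl1)
      (fun a b hab => one_le_pd hl1 hconn hab) (pd_symm hl1 hconn hlsymm)
      (μ t x y) _ _ (hμ0 t x y) (hμ1 t x y) (hμ2 t x y)) (hμ3 t x y)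
  have hstat' := stat_iter K π hstat t
  have hq : ∀ a, kpow K t x a - π a = ∑ y, π y * (kpow K t x a - kpow K t y a) := by
    intro a
    have h : ∑ y, π y * (kpow K t x a - kpow K t y a)
        = (∑ y, π y) * kpow K t x a - ∑ y, π y * kpow K t y a := by
      rw [Finset.sum_mul, ← Finset.sum_sub_distrib]
      exact Finset.sum_congr rfl fun y _ => by ring
    rw [h, hπ1, hstat' a, one_mul]
  have hexp : (0:ℝ) ≤ Real.exp (-α) ^ t := by positivity
  calc (1 / 2) * ∑ a, |kpow K t x a - π a|
      ≤ (1 / 2) * ∑ a, ∑ y, π y * |kpow K t x a - kpow K t y a| := by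
        have key : ∀ a, |kpow K t x a - π a|
            ≤ ∑ y, π y * |kpow K t x a - kpow K t y a| := by
          intro a
          rw [hq a]
          refine le_trans (Finset.abs_sum_le_sum_abs _ _) ?_
          refine Finset.sum_le_sum fun y _ => ?_
          rw [abs_mul, abs_of_nonneg (hπ0 y)]
        have h2 := Finset.sum_le_sum fun a (_ : a ∈ Finset.univ) => key a
        linarith
    _ = ∑ y, π y * ((1 / 2) * ∑ a, |kpow K t x a - kpow K t y a|) := by
        rw [show (∑ a, ∑ y, π y * |kpow K t x a - kpow K t y a|)
            = ∑ y, ∑ a, π y * |kpow K t x a - kpow K t y a| from Finset.sum_comm,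
          Finset.mul_sum]
        refine Finset.sum_congr rfl fun y _ => ?_
        rw [← Finset.mul_sum]
        ring
    _ ≤ ∑ y, π y * (Real.exp (-α) ^ t * pathDist G l x y) :=
        Finset.sum_le_sum fun y _ => mul_le_mul_of_nonneg_left (htv y) (hπ0 y)
    _ ≤ ∑ y, π y * (Real.exp (-α) ^ t * sSup S) :=
        Finset.sum_le_sum fun y _ => mul_le_mul_of_nonneg_left
          (mul_le_mul_of_nonneg_left (hdiam x y) hexp) (hπ0 y)
    _ = Real.exp (-α) ^ t * sSup S := by rw [← Finset.sum_mul, hπ1, one_mul]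
    _ = Real.exp (-α * t) * sSup S := by
        rw [← Real.exp_nat_mul, mul_comm (t : ℝ) (-α)]
end
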